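/- Every set P of n non-collinear points in the plane contains a point incident to at least √n of the lines determined by P. -/

import Mathlib

/-- A line in the plane: an affine subspace of ℝ² whose direction has dimension 1. -/
def IsLine (L : AffineSubspace ℝ (ℝ × ℝ)) : Prop :=
  Module.finrank ℝ L.direction = 1

/-- The set of lines determined by `P`: lines passing through at least two points of `P`. -/
def detLines (P : Finset (ℝ × ℝ)) : Set (AffineSubspace ℝ (ℝ × ℝ)) :=
  {L | IsLine L ∧ 2 ≤ ((P : Set (ℝ × ℝ)) ∩ (L : Set (ℝ × ℝ))).ncard}

/-- `d(Q)`: the number of lines of `L(P)` incident to `Q`. -/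
noncomputable def lineNum (P : Finset (ℝ × ℝ)) (Q : ℝ × ℝ) : ℕ :=
  {L ∈ detLines P | Q ∈ L}.ncard

/-- `l_r`: the number of `r`-rich lines, i.e. lines of `L(P)` passing through exactly `r`
points of `P`. -/
noncomputable def richLines (P : Finset (ℝ × ℝ)) (r : ℕ) : ℕ :=
  {L ∈ detLines P | ((P : Set (ℝ × ℝ)) ∩ (L : Set (ℝ × ℝ))).ncard = r}.ncard

noncomputable def lineThrough (a b : ℝ × ℝ) : AffineSubspace ℝ (ℝ × ℝ) :=
  affineSpan ℝ {a, b}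

lemma left_mem_lineThrough (a b : ℝ × ℝ) : a ∈ lineThrough a b :=
  mem_affineSpan ℝ (by simp)

lemma right_mem_lineThrough (a b : ℝ × ℝ) : b ∈ lineThrough a b :=
  mem_affineSpan ℝ (by simp)

lemma isLine_lineThrough {a b : ℝ × ℝ} (h : a ≠ b) : IsLine (lineThrough a b) := by
  unfold IsLine lineThrough
  rw [direction_affineSpan, vectorSpan_pair]
  exact finrank_span_singleton (by simpa [vsub_eq_sub, sub_eq_zero] using h)

lemma line_eq {L : AffineSubspace ℝ (ℝ × ℝ)} (hL : IsLine L) {a b : ℝ × ℝ}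
    (ha : a ∈ L) (hb : b ∈ L) (hab : a ≠ b) : L = lineThrough a b := by
  have hle : lineThrough a b ≤ L := affineSpan_le.2 (by
    intro x hx
    rcases hx with rfl | hx
    · exact ha
    · simp at hx; subst hx; exact hb)
  have hdir : (lineThrough a b).direction = L.direction := by
    apply Submodule.eq_of_le_of_finrank_eq (AffineSubspace.direction_le hle)
    rw [hL, (isLine_lineThrough hab : _)]
  exact (AffineSubspace.ext_of_direction_eq hdir
    ⟨a, left_mem_lineThrough a b, ha⟩).symm

open Classical in
lemma inter_ncard_eq (P : Finset (ℝ × ℝ)) (L : AffineSubspace ℝ (ℝ × ℝ)) :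
    ((P : Set (ℝ × ℝ)) ∩ (L : Set (ℝ × ℝ))).ncard
      = (P.filter (fun p => p ∈ L)).card := by
  classical
  rw [← Set.ncard_coe_finset]
  congr 1
  ext x
  simp [and_comm]

lemma exists_pair_of_detLines {P : Finset (ℝ × ℝ)} {L : AffineSubspace ℝ (ℝ × ℝ)}
    (hL : L ∈ detLines P) :
    ∃ a ∈ P, ∃ b ∈ P, a ≠ b ∧ a ∈ L ∧ b ∈ L := by
  obtain ⟨hline, hcard⟩ := hL
  have hfin : ((P : Set (ℝ × ℝ)) ∩ (L : Set (ℝ × ℝ))).Finite :=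
    (P.finite_toSet).inter_of_left _
  obtain ⟨a, ha, b, hb, hab⟩ := (Set.one_lt_ncard hfin).1 hcard
  exact ⟨a, ha.1, b, hb.1, hab, ha.2, hb.2⟩

lemma detLines_finite (P : Finset (ℝ × ℝ)) : (detLines P).Finite := by
  apply Set.Finite.subset (Set.Finite.image
    (fun p : (ℝ × ℝ) × (ℝ × ℝ) => lineThrough p.1 p.2)
    ((P ×ˢ P).finite_toSet))
  intro L hL
  obtain ⟨a, ha, b, hb, hab, haL, hbL⟩ := exists_pair_of_detLines hL
  exact ⟨(a, b), by simp [ha, hb], (line_eq hL.1 haL hbL hab).symm⟩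

lemma lineThrough_mem_detLines {P : Finset (ℝ × ℝ)} {a b : ℝ × ℝ}
    (ha : a ∈ P) (hb : b ∈ P) (hab : a ≠ b) : lineThrough a b ∈ detLines P := by
  refine ⟨isLine_lineThrough hab, ?_⟩
  exact (Set.one_lt_ncard ((P.finite_toSet).inter_of_left _)).2 ⟨a, ⟨ha, left_mem_lineThrough a b⟩, b, ⟨hb, right_mem_lineThrough a b⟩, hab⟩

lemma exists_not_mem {P : Finset (ℝ × ℝ)} (hnoncol : ¬ Collinear ℝ (P : Set (ℝ × ℝ)))
    {L : AffineSubspace ℝ (ℝ × ℝ)} (hL : IsLine L) : ∃ c ∈ P, c ∉ L := by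
  by_contra h
  push_neg at h
  apply hnoncol
  have hsub : (P : Set (ℝ × ℝ)) ⊆ (L : Set (ℝ × ℝ)) := fun x hx => h x hx
  rw [collinear_iff_rank_le_one]
  have : vectorSpan ℝ (P : Set (ℝ × ℝ)) ≤ L.direction :=
    vectorSpan_mono ℝ hsub |>.trans (by rw [AffineSubspace.direction_eq_vectorSpan])
  calc Module.rank ℝ (vectorSpan ℝ (P : Set (ℝ × ℝ)))
      ≤ Module.rank ℝ L.direction := Submodule.rank_mono this
    _ = 1 := by rw [← Module.finrank_eq_rank, hL]; norm_num

open Classical in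
lemma lineNum_eq (P : Finset (ℝ × ℝ)) (Q : ℝ × ℝ) :
    lineNum P Q = ((detLines_finite P).toFinset.filter (fun L => Q ∈ L)).card := by
  rw [lineNum, ← Set.ncard_coe_finset]
  congr 1
  ext L
  simp [Set.Finite.mem_toFinset]

/-- Dirac's theorem: every set `P` of `n` non-collinear points in the plane contains a point
incident to at least `√n` lines of `L(P)`. -/
theorem exists_point_sqrt_lines (n : ℕ) (P : Finset (ℝ × ℝ))
    (hcard : P.card = n) (hnoncol : ¬ Collinear ℝ (P : Set (ℝ × ℝ))) :
    ∃ Q ∈ P, Real.sqrt n ≤ lineNum P Q := by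
  classical
  -- two distinct points
  obtain ⟨a, ha, b, hb, hab⟩ : ∃ a ∈ P, ∃ b ∈ P, a ≠ b := by
    by_contra h
    push_neg at h
    apply hnoncol
    rcases P.eq_empty_or_nonempty with he | ⟨x, hx⟩
    · rw [he]; simpa using collinear_empty ℝ (P := ℝ × ℝ)
    · exact Collinear.subset (fun y hy => by simp [h y hy x hx]) (collinear_singleton ℝ x)
  set D : Finset (AffineSubspace ℝ (ℝ × ℝ)) := (detLines_finite P).toFinset with hD
  have memD : ∀ L, L ∈ D ↔ L ∈ detLines P := fun L => Set.Finite.mem_toFinset _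
  set m : ℕ := D.sup (fun L => (P.filter (fun p => p ∈ L)).card) with hm
  have hab_mem : lineThrough a b ∈ D := (memD _).2 (lineThrough_mem_detLines ha hb hab)
  have hm2 : 2 ≤ m := by
    refine le_trans ?_ (Finset.le_sup hab_mem)
    rw [← inter_ncard_eq]
    exact (lineThrough_mem_detLines ha hb hab).2
  have key : ∀ L ∈ D, ∀ Q ∈ P, Q ∉ L → (P.filter (fun p => p ∈ L)).card ≤ lineNum P Q := by
    intro L hLD Q hQ hQL
    rw [lineNum_eq]
    apply Finset.card_le_card_of_injOn (fun p => lineThrough Q p)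
    · intro p hp
      simp only [Finset.mem_coe, Finset.mem_filter] at hp ⊢
      have hQp : Q ≠ p := fun h => hQL (h ▸ hp.2)
      exact ⟨(memD _).2 (lineThrough_mem_detLines hQ hp.1 hQp),
        left_mem_lineThrough Q p⟩
    · intro p₁ h₁ p₂ h₂ heq
      simp only [Finset.coe_filter, Set.mem_setOf_eq] at h₁ h₂
      by_contra hne
      have hLline : IsLine L := ((memD L).1 hLD).1
      have hp1Q : p₁ ≠ Q := fun h => hQL (h ▸ h₁.2)
      have heq' : lineThrough Q p₁ = lineThrough Q p₂ := heq
      have h1' : p₁ ∈ lineThrough Q p₂ := heq' ▸ right_mem_lineThrough Q p₁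
      have h2' : p₂ ∈ lineThrough Q p₂ := right_mem_lineThrough Q p₂
      have e1 : L = lineThrough p₁ p₂ := line_eq hLline h₁.2 h₂.2 hne
      have hQp2 : Q ≠ p₂ := fun h => hQL (h ▸ h₂.2)
      have e2 : lineThrough Q p₂ = lineThrough p₁ p₂ :=
        line_eq (isLine_lineThrough hQp2) h1' h2' hne
      exact hQL (e1 ▸ e2 ▸ left_mem_lineThrough Q p₂)
  by_cases hcase : n ≤ m ^ 2
  · -- big line case
    obtain ⟨L₀, hL₀, hL₀m⟩ := Finset.exists_mem_eq_sup D ⟨_, hab_mem⟩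
      (fun L => (P.filter (fun p => p ∈ L)).card)
    obtain ⟨Q, hQ, hQL⟩ := exists_not_mem hnoncol ((memD L₀).1 hL₀).1
    refine ⟨Q, hQ, ?_⟩
    have h1 : m ≤ lineNum P Q := le_of_eq_of_le hL₀m (key L₀ hL₀ Q hQ hQL)
    calc Real.sqrt n ≤ Real.sqrt (m ^ 2) := Real.sqrt_le_sqrt (by exact_mod_cast hcase)
      _ = m := by rw [Real.sqrt_sq] <;> positivity
      _ ≤ lineNum P Q := by exact_mod_cast h1
  · -- covering case
    push_neg at hcase
    refine ⟨a, ha, ?_⟩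
    set d : ℕ := lineNum P a with hd
    set T : Finset (AffineSubspace ℝ (ℝ × ℝ)) := D.filter (fun L => a ∈ L) with hT
    have hTd : T.card = d := (lineNum_eq P a).symm
    have hcover : P.erase a ⊆ T.biUnion (fun L => (P.filter (fun p => p ∈ L)).erase a) := by
      intro p hp
      rw [Finset.mem_erase] at hp
      rw [Finset.mem_biUnion]
      refine ⟨lineThrough a p, ?_, ?_⟩
      · rw [hT, Finset.mem_filter]
        exact ⟨(memD _).2 (lineThrough_mem_detLines ha hp.2 (Ne.symm hp.1)),
          left_mem_lineThrough a p⟩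
      · rw [Finset.mem_erase, Finset.mem_filter]
        exact ⟨hp.1, hp.2, right_mem_lineThrough a p⟩
    have hbound : n - 1 ≤ d * (m - 1) := by
      calc n - 1 = (P.erase a).card := by rw [Finset.card_erase_of_mem ha, hcard]
        _ ≤ (T.biUnion (fun L => (P.filter (fun p => p ∈ L)).erase a)).card :=
          Finset.card_le_card hcover
        _ ≤ ∑ L ∈ T, ((P.filter (fun p => p ∈ L)).erase a).card := Finset.card_biUnion_le
        _ ≤ ∑ L ∈ T, (m - 1) := by
          apply Finset.sum_le_sum
          intro L hL
          rw [hT, Finset.mem_filter] at hL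
          rw [Finset.card_erase_of_mem (Finset.mem_filter.2 ⟨ha, hL.2⟩)]
          exact Nat.sub_le_sub_right (Finset.le_sup (f := fun L => (P.filter (fun p => p ∈ L)).card) hL.1) 1
        _ = d * (m - 1) := by rw [Finset.sum_const, smul_eq_mul, hTd]
    -- real arithmetic
    by_contra hlt
    push_neg at hlt
    have hn1 : 1 ≤ n := by
      rw [← hcard]; exact Finset.card_pos.2 ⟨a, ha⟩
    have hmn : (m : ℝ) < Real.sqrt n := by
      rw [show (m:ℝ) = Real.sqrt ((m:ℝ)^2) by rw [Real.sqrt_sq (by positivity)]]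
      apply Real.sqrt_lt_sqrt (by positivity)
      exact_mod_cast hcase
    have hcast : (n : ℝ) - 1 ≤ (d : ℝ) * ((m : ℝ) - 1) := by
      have := hbound
      have h1 : ((n - 1 : ℕ) : ℝ) = (n : ℝ) - 1 := by
        rw [Nat.cast_sub hn1]; norm_num
      have h2 : ((m - 1 : ℕ) : ℝ) = (m : ℝ) - 1 := by
        rw [Nat.cast_sub (by omega)]; norm_num
      calc (n : ℝ) - 1 = ((n - 1 : ℕ) : ℝ) := h1.symm
        _ ≤ ((d * (m - 1) : ℕ) : ℝ) := by exact_mod_cast this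
        _ = (d : ℝ) * ((m : ℝ) - 1) := by rw [Nat.cast_mul, h2]
    have hs2 : (2:ℝ) ≤ Real.sqrt n := le_trans (by exact_mod_cast hm2) hmn.le
    nlinarith [hlt, hmn, Real.sq_sqrt (show (0:ℝ) ≤ n by positivity),
      Real.sqrt_nonneg (n:ℝ), hcast]
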